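/- Let C be the circle of center c ∈ ℂ and radius r > 0, positively oriented, whose open interior contains all the points λ_1, …, λ_N and x_1, …, x_N, and let g be holomorphic on an open set containing the closed disk {z : |z − c| ≤ r}. Then for every j = 1, …, N: Σ_{k=1}^N γ_k · g(λ_k)/(x_j − λ_k) = (1/(2πi)) ∮_C g(λ)/(φ(λ)·(x_j − λ)) dλ, where the integrand, a priori defined off {x_1,…,x_N} ∪ {λ_1,…,λ_N}, extends across each x_i to a meromorphic function with simple poles only at λ_1, …, λ_N. -/

import Mathlib

open Polynomial Finset

private lemma natDegree_lt_of_coeff_eq_zero {p : Polynomial ℂ} {n : ℕ}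
    (h1 : p.natDegree ≤ n) (h2 : p.coeff n = 0) (h3 : 0 < n) : p.natDegree < n := by
  rcases eq_or_ne p 0 with rfl | hp
  · simpa using h3
  rcases lt_or_eq_of_le h1 with h | h
  · exact h
  · exfalso
    apply hp
    rw [← leadingCoeff_eq_zero, leadingCoeff, h]
    exact h2

private lemma key_poly (N : ℕ) (hN : 0 < N) (a b : Fin N → ℂ) (hb : Function.Injective b)
    (hroot : ∀ k, (∑ i : Fin N, b k * ∏ i' ∈ univ.erase i, (b k - a i')) = 0) :
    (∑ i : Fin N, (X : ℂ[X]) * ∏ i' ∈ univ.erase i, (X - C (a i')))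
      = C (N : ℂ) * ∏ k : Fin N, (X - C (b k)) := by
  set Q : ℂ[X] := ∑ i : Fin N, (X : ℂ[X]) * ∏ i' ∈ univ.erase i, (X - C (a i')) with hQ
  set S : ℂ[X] := ∏ k : Fin N, ((X : ℂ[X]) - C (b k)) with hS
  have hSm : S.Monic := monic_prod_of_monic _ _ fun k _ => monic_X_sub_C _
  have hSdeg : S.natDegree = N := by
    rw [hS, natDegree_prod _ _ fun k _ => X_sub_C_ne_zero (b k)]
    simp [natDegree_X_sub_C]
  have hTm : ∀ i : Fin N, ((X : ℂ[X]) * ∏ i' ∈ univ.erase i, (X - C (a i'))).Monic :=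
    fun i => monic_X.mul (monic_prod_of_monic _ _ fun k _ => monic_X_sub_C _)
  have hTdeg : ∀ i : Fin N,
      ((X : ℂ[X]) * ∏ i' ∈ univ.erase i, (X - C (a i'))).natDegree = N := by
    intro i
    rw [natDegree_mul X_ne_zero (monic_prod_of_monic _ _ fun k _ => monic_X_sub_C _).ne_zero,
      natDegree_X, natDegree_prod _ _ fun k _ => X_sub_C_ne_zero _]
    simp only [natDegree_X_sub_C, Finset.sum_const, smul_eq_mul, mul_one,
      card_erase_of_mem (mem_univ i), card_univ, Fintype.card_fin]
    omega
  have hQdeg : Q.natDegree ≤ N := by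
    apply natDegree_sum_le_of_forall_le
    intro i _
    exact le_of_eq (hTdeg i)
  have hQcoeff : Q.coeff N = N := by
    rw [hQ, finset_sum_coeff]
    have h1 : ∀ i : Fin N,
        ((X : ℂ[X]) * ∏ i' ∈ univ.erase i, (X - C (a i'))).coeff N = 1 := by
      intro i
      have := (hTm i).coeff_natDegree
      rwa [hTdeg i] at this
    simp [h1, card_univ]
  have hD : Q - C (N : ℂ) * S = 0 := by
    apply Polynomial.eq_zero_of_natDegree_lt_card_of_eval_eq_zero _ hb
    · intro k
      have hevS : S.eval (b k) = 0 := by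
        rw [hS, eval_prod]
        exact Finset.prod_eq_zero (mem_univ k) (by simp)
      have hevQ : Q.eval (b k) = 0 := by
        rw [hQ, eval_finset_sum]
        simpa [eval_prod] using hroot k
      simp [hevS, hevQ]
    · have hle : (Q - C (N : ℂ) * S).natDegree ≤ N := by
        refine le_trans (natDegree_sub_le _ _) ?_
        simp only [max_le_iff]
        exact ⟨hQdeg, le_trans (natDegree_C_mul_le _ _) hSdeg.le⟩
      have hc : (Q - C (N : ℂ) * S).coeff N = 0 := by
        rw [coeff_sub, hQcoeff, coeff_C_mul, ← hSdeg, hSm.coeff_natDegree, mul_one, sub_self]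
      have := natDegree_lt_of_coeff_eq_zero hle hc hN
      simpa [Fintype.card_fin] using this
  have := sub_eq_zero.mp hD
  exact this

private lemma pf_poly (n : ℕ) (b : Fin n → ℂ) (hb : Function.Injective b)
    (R : ℂ[X]) (hR : R.natDegree < n) :
    R = ∑ k : Fin n, C (R.eval (b k) / ∏ k' ∈ univ.erase k, (b k - b k')) *
        ∏ k' ∈ univ.erase k, (X - C (b k')) := by
  set T : ℂ[X] := ∑ k : Fin n, C (R.eval (b k) / ∏ k' ∈ univ.erase k, (b k - b k')) *
      ∏ k' ∈ univ.erase k, (X - C (b k')) with hT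
  have hD : R - T = 0 := by
    apply Polynomial.eq_zero_of_natDegree_lt_card_of_eval_eq_zero _ hb
    · intro k
      have hevT : T.eval (b k) = R.eval (b k) := by
        rw [hT, eval_finset_sum]
        rw [Finset.sum_eq_single k]
        · rw [eval_mul, eval_C, eval_prod]
          simp only [eval_sub, eval_X, eval_C]
          have hne : (∏ k' ∈ univ.erase k, (b k - b k')) ≠ 0 := by
            apply Finset.prod_ne_zero_iff.mpr
            intro k' hk'
            exact sub_ne_zero.mpr fun h => (mem_erase.mp hk').1 (hb h).symm
          exact div_mul_cancel₀ _ hne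
        · intro m _ hm
          rw [eval_mul, eval_prod]
          have h0 : (∏ j ∈ univ.erase m, Polynomial.eval (b k) ((X : ℂ[X]) - C (b j))) = 0 :=
            Finset.prod_eq_zero (mem_erase.mpr ⟨Ne.symm hm, mem_univ k⟩) (by simp)
          rw [h0, mul_zero]
        · simp
      rw [eval_sub, hevT, sub_self]
    · have hTdeg : T.natDegree < n := by
        rcases eq_or_ne T 0 with h | h
        · simp [h]; omega
        have : T.natDegree ≤ n - 1 := by
          apply natDegree_sum_le_of_forall_le
          intro k _
          refine le_trans (natDegree_C_mul_le _ _) ?_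
          refine le_trans (natDegree_prod_le _ _) ?_
          simp [natDegree_X_sub_C, card_erase_of_mem (mem_univ k), card_univ]
        omega
      have : (R - T).natDegree < n :=
        lt_of_le_of_lt (natDegree_sub_le _ _) (max_lt hR hTdeg)
      simpa [Fintype.card_fin] using this
  exact (sub_eq_zero.mp hD)

private lemma circleIntegral_finset_sum {ι : Type*} (s : Finset ι) (f : ι → ℂ → ℂ)
    {c : ℂ} {R : ℝ} (h : ∀ i ∈ s, CircleIntegrable (f i) c R) :
    (∮ z in C(c, R), ∑ i ∈ s, f i z) = ∑ i ∈ s, ∮ z in C(c, R), f i z := by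
  simp only [circleIntegral, smul_sum]
  exact intervalIntegral.integral_finset_sum fun i hi => (h i hi).out

private lemma derivative_finset_prod {ι : Type*} [DecidableEq ι] (s : Finset ι) (f : ι → ℂ[X]) :
    Polynomial.derivative (∏ i ∈ s, f i)
      = ∑ i ∈ s, (∏ j ∈ s.erase i, f j) * Polynomial.derivative (f i) := by
  induction s using Finset.induction_on with
  | empty => simp
  | @insert a s ha ih =>
    rw [Finset.prod_insert ha, derivative_mul, ih, Finset.sum_insert ha, Finset.erase_insert ha,
      Finset.mul_sum, mul_comm (Polynomial.derivative (f a)) (∏ i ∈ s, f i)]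
    congr 1
    refine Finset.sum_congr rfl fun i hi => ?_
    have hai : a ≠ i := fun h => ha (h ▸ hi)
    rw [Finset.erase_insert_of_ne hai, Finset.prod_insert
      (fun h => ha (Finset.mem_of_mem_erase h))]
    ring



/-- Residue-theorem representation of the spectral sums.  Let
`0 = lam 0 < … < lam (N-1)` be the zeros of `φ` (the eigenvalues of the trap-model generator),
let `γ k = (∑ j, x j / (x j - lam k)²)⁻¹`, let `C` be the positively oriented circle of center
`c` and radius `r > 0` whose open interior contains all the `lam k` and all the `x i`, and let
`g` be holomorphic on an open set containing the closed disk `{z : |z - c| ≤ r}`.  Then for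
every `j`,
`∑ k, γ k * g (lam k) / (x j - lam k) = (1/(2πi)) ∮_C g(λ) / (φ(λ) * (x j - λ)) dλ`. -/
theorem rem_trap_residue_representation
    (N : ℕ) (hN : 2 ≤ N) (x : Fin N → ℝ)
    (hx_pos : ∀ i, 0 < x i) (hx_mono : StrictMono x)
    (lam : Fin N → ℝ) (hlam_mono : StrictMono lam)
    (hlam_zero : lam ⟨0, by omega⟩ = 0)
    (hlam_ne : ∀ k j, x j ≠ lam k)
    (hlam_root : ∀ k, ∑ j : Fin N, lam k / (x j - lam k) = 0)
    (γ : Fin N → ℝ) (hγ : ∀ k, γ k = (∑ j : Fin N, x j / (x j - lam k) ^ 2)⁻¹)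
    (c : ℂ) (r : ℝ) (hr : 0 < r)
    (h_in : ∀ i : Fin N,
      ‖(lam i : ℂ) - c‖ < r ∧ ‖(x i : ℂ) - c‖ < r)
    (g : ℂ → ℂ) (U : Set ℂ) (hU : IsOpen U) (hUball : Metric.closedBall c r ⊆ U)
    (hg : DifferentiableOn ℂ g U) :
    ∀ j : Fin N,
      ∑ k : Fin N, (γ k : ℂ) * g ((lam k : ℝ) : ℂ) / ((x j : ℂ) - (lam k : ℂ)) =
        (1 / (2 * Real.pi * Complex.I)) *
          ∮ z in C(c, r),
            g z / ((∑ i : Fin N, z / ((x i : ℂ) - z)) * ((x j : ℂ) - z)) := by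
  intro j
  have hNpos : 0 < N := by omega
  have hNC : (N : ℂ) ≠ 0 := Nat.cast_ne_zero.mpr (by omega)
  -- basic distinctness facts over ℂ
  have hxlc : ∀ i k : Fin N, ((x i : ℝ) : ℂ) ≠ ((lam k : ℝ) : ℂ) := by
    intro i k h
    exact hlam_ne k i (by exact_mod_cast h)
  have hlc_inj : Function.Injective (fun k : Fin N => ((lam k : ℝ) : ℂ)) := by
    intro k k' h
    simp only [] at h
    exact hlam_mono.injective (by exact_mod_cast h)
  -- root identity over ℂ
  have hφ0 : ∀ k : Fin N, (∑ i : Fin N, ((lam k : ℝ) : ℂ) / ((x i : ℂ) - (lam k : ℂ))) = 0 := by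
    intro k
    have h := congrArg (fun t : ℝ => (t : ℂ)) (hlam_root k)
    push_cast at h
    exact h
  have hroot' : ∀ k : Fin N,
      (∑ i : Fin N, ((lam k : ℝ) : ℂ) * ∏ i' ∈ univ.erase i, (((lam k : ℝ) : ℂ) - ((x i' : ℝ) : ℂ))) = 0 := by
    intro k
    have h0 : (∑ i : Fin N, ((lam k : ℝ) : ℂ) / (((lam k : ℝ) : ℂ) - ((x i : ℝ) : ℂ))) = 0 := by
      have : ∀ i : Fin N, ((lam k : ℝ) : ℂ) / (((lam k : ℝ) : ℂ) - ((x i : ℝ) : ℂ))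
          = -(((lam k : ℝ) : ℂ) / (((x i : ℝ) : ℂ) - ((lam k : ℝ) : ℂ))) := by
        intro i
        rw [← neg_sub, div_neg]
      simp only [this, Finset.sum_neg_distrib]
      rw [hφ0 k, neg_zero]
    calc (∑ i : Fin N, ((lam k : ℝ) : ℂ) * ∏ i' ∈ univ.erase i, (((lam k : ℝ) : ℂ) - ((x i' : ℝ) : ℂ)))
        = ∑ i : Fin N, (((lam k : ℝ) : ℂ) / (((lam k : ℝ) : ℂ) - ((x i : ℝ) : ℂ))) *
            ∏ i' : Fin N, (((lam k : ℝ) : ℂ) - ((x i' : ℝ) : ℂ)) := by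
          refine Finset.sum_congr rfl fun i _ => ?_
          rw [← Finset.mul_prod_erase univ (fun i' => ((lam k : ℝ) : ℂ) - ((x i' : ℝ) : ℂ)) (mem_univ i),
            ← mul_assoc, div_mul_cancel₀]
          exact sub_ne_zero.mpr (Ne.symm (hxlc i k))
      _ = (∑ i : Fin N, ((lam k : ℝ) : ℂ) / (((lam k : ℝ) : ℂ) - ((x i : ℝ) : ℂ))) *
            ∏ i' : Fin N, (((lam k : ℝ) : ℂ) - ((x i' : ℝ) : ℂ)) := by rw [Finset.sum_mul]
      _ = 0 := by rw [h0, zero_mul]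
  -- polynomials
  set Qpoly : ℂ[X] := ∑ i : Fin N, (X : ℂ[X]) * ∏ i' ∈ univ.erase i, (X - C ((x i' : ℝ) : ℂ)) with hQdef
  set Spoly : ℂ[X] := ∏ k : Fin N, ((X : ℂ[X]) - C ((lam k : ℝ) : ℂ)) with hSdef
  have hQS : Qpoly = C (N : ℂ) * Spoly :=
    key_poly N hNpos (fun i => ((x i : ℝ) : ℂ)) (fun k => ((lam k : ℝ) : ℂ)) hlc_inj hroot'
  -- evaluation of Qpoly off the x's
  have hQeval : ∀ z : ℂ, (∀ i, z ≠ ((x i : ℝ) : ℂ)) →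
      Polynomial.eval z Qpoly
        = -((∑ i : Fin N, z / (((x i : ℝ) : ℂ) - z)) * ∏ i : Fin N, (z - ((x i : ℝ) : ℂ))) := by
    intro z hz
    rw [hQdef, eval_finset_sum]
    have hterm : ∀ i ∈ (univ : Finset (Fin N)),
        Polynomial.eval z ((X : ℂ[X]) * ∏ i' ∈ univ.erase i, (X - C ((x i' : ℝ) : ℂ)))
          = -(z / (((x i : ℝ) : ℂ) - z)) * ∏ i' : Fin N, (z - ((x i' : ℝ) : ℂ)) := by
      intro i _
      rw [eval_mul, eval_X, eval_prod]
      simp only [eval_sub, eval_X, eval_C]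
      rw [← Finset.mul_prod_erase univ (fun i' => z - ((x i' : ℝ) : ℂ)) (mem_univ i), ← mul_assoc]
      congr 1
      have hd : ((x i : ℝ) : ℂ) - z ≠ 0 := sub_ne_zero.mpr (Ne.symm (hz i))
      field_simp
      ring
    rw [Finset.sum_congr rfl hterm, ← Finset.sum_mul, Finset.sum_neg_distrib, neg_mul]
  -- partial fraction decomposition of ∏_{i≠j}(X - x i)
  have hPF : (∏ i ∈ univ.erase j, ((X : ℂ[X]) - C ((x i : ℝ) : ℂ)))
      = ∑ k : Fin N, C ((∏ i ∈ univ.erase j, (((lam k : ℝ) : ℂ) - ((x i : ℝ) : ℂ))) /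
            ∏ k' ∈ univ.erase k, (((lam k : ℝ) : ℂ) - ((lam k' : ℝ) : ℂ))) *
          ∏ k' ∈ univ.erase k, ((X : ℂ[X]) - C ((lam k' : ℝ) : ℂ)) := by
    have hdeg : (∏ i ∈ univ.erase j, ((X : ℂ[X]) - C ((x i : ℝ) : ℂ))).natDegree < N := by
      refine lt_of_le_of_lt (natDegree_prod_le _ _) ?_
      simp only [natDegree_X_sub_C, Finset.sum_const, smul_eq_mul, mul_one,
        card_erase_of_mem (mem_univ j), card_univ, Fintype.card_fin]
      omega
    have h := pf_poly N (fun k => ((lam k : ℝ) : ℂ)) hlc_inj _ hdeg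
    rw [h]
    refine Finset.sum_congr rfl fun k _ => ?_
    congr 2
    rw [eval_prod]
    simp
  set B : Fin N → ℂ := fun k => (∏ i ∈ univ.erase j, (((lam k : ℝ) : ℂ) - ((x i : ℝ) : ℂ))) /
      ∏ k' ∈ univ.erase k, (((lam k : ℝ) : ℂ) - ((lam k' : ℝ) : ℂ)) with hB
  -- nonvanishing products
  have hprodl : ∀ k : Fin N, (∏ k' ∈ univ.erase k, (((lam k : ℝ) : ℂ) - ((lam k' : ℝ) : ℂ))) ≠ 0 := by
    intro k
    apply Finset.prod_ne_zero_iff.mpr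
    intro k' hk'
    have hkk : k ≠ k' := fun h => (mem_erase.mp hk').1 h.symm
    exact sub_ne_zero.mpr fun h => hkk (hlc_inj h)
  have hprodx : ∀ k : Fin N, (∏ i : Fin N, (((lam k : ℝ) : ℂ) - ((x i : ℝ) : ℂ))) ≠ 0 := by
    intro k
    apply Finset.prod_ne_zero_iff.mpr
    intro i _
    exact sub_ne_zero.mpr (Ne.symm (hxlc i k))
  -- the residue/γ identity
  have hgamma : ∀ k : Fin N, (γ k : ℂ) / (((x j : ℝ) : ℂ) - ((lam k : ℝ) : ℂ)) = B k / N := by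
    intro k
    have hpos : 0 < ∑ i : Fin N, x i / (x i - lam k) ^ 2 := by
      apply Finset.sum_pos
      · intro i _
        exact div_pos (hx_pos i) (pow_two_pos_of_ne_zero (sub_ne_zero.mpr (hlam_ne k i)))
      · exact ⟨j, mem_univ j⟩
    have hcast : ((∑ i : Fin N, x i / (x i - lam k) ^ 2 : ℝ) : ℂ)
        = ∑ i : Fin N, ((x i : ℝ) : ℂ) / (((x i : ℝ) : ℂ) - ((lam k : ℝ) : ℂ)) ^ 2 := by
      push_cast
      rfl
    have hΦne : (∑ i : Fin N, ((x i : ℝ) : ℂ) / (((x i : ℝ) : ℂ) - ((lam k : ℝ) : ℂ)) ^ 2) ≠ 0 := by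
      rw [← hcast]
      exact_mod_cast ne_of_gt hpos
    have hγc : (γ k : ℂ)
        = (∑ i : Fin N, ((x i : ℝ) : ℂ) / (((x i : ℝ) : ℂ) - ((lam k : ℝ) : ℂ)) ^ 2)⁻¹ := by
      rw [hγ k, ← hcast]
      push_cast
      rfl
    have hφder : HasDerivAt (fun z : ℂ => ∑ i : Fin N, z / (((x i : ℝ) : ℂ) - z))
        (∑ i : Fin N, ((x i : ℝ) : ℂ) / (((x i : ℝ) : ℂ) - ((lam k : ℝ) : ℂ)) ^ 2)
        ((lam k : ℝ) : ℂ) := by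
      apply HasDerivAt.fun_sum
      intro i _
      have hd : ((x i : ℝ) : ℂ) - ((lam k : ℝ) : ℂ) ≠ 0 := sub_ne_zero.mpr (hxlc i k)
      have h := (hasDerivAt_id (((lam k : ℝ) : ℂ))).fun_div
        ((hasDerivAt_id (((lam k : ℝ) : ℂ))).const_sub ((x i : ℝ) : ℂ)) hd
      refine h.congr_deriv ?_
      simp only [id_eq]
      ring
    have hmem : {z : ℂ | ∀ i, z ≠ ((x i : ℝ) : ℂ)} ∈ nhds ((lam k : ℝ) : ℂ) := by
      have ho : IsOpen {z : ℂ | ∀ i, z ≠ ((x i : ℝ) : ℂ)} := by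
        have he : {z : ℂ | ∀ i, z ≠ ((x i : ℝ) : ℂ)} = ⋂ i, {z : ℂ | z ≠ ((x i : ℝ) : ℂ)} := by
          ext z
          simp [Set.mem_iInter]
        rw [he]
        exact isOpen_iInter_of_finite fun i => isOpen_ne
      exact ho.mem_nhds fun i => Ne.symm (hxlc i k)
    have hPeval : ∀ z : ℂ,
        Polynomial.eval z (∏ i : Fin N, ((X : ℂ[X]) - C ((x i : ℝ) : ℂ)))
          = ∏ i : Fin N, (z - ((x i : ℝ) : ℂ)) := by
      intro z
      rw [eval_prod]
      simp
    have hDQ : HasDerivAt (fun z : ℂ => Polynomial.eval z Qpoly)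
        (-((∑ i : Fin N, ((x i : ℝ) : ℂ) / (((x i : ℝ) : ℂ) - ((lam k : ℝ) : ℂ)) ^ 2) *
          Polynomial.eval ((lam k : ℝ) : ℂ) (∏ i : Fin N, ((X : ℂ[X]) - C ((x i : ℝ) : ℂ)))))
        ((lam k : ℝ) : ℂ) := by
      have h1 := (hφder.mul ((∏ i : Fin N, ((X : ℂ[X]) - C ((x i : ℝ) : ℂ))).hasDerivAt
        ((lam k : ℝ) : ℂ))).neg
      rw [hφ0 k, zero_mul, add_zero] at h1
      apply h1.congr_of_eventuallyEq
      filter_upwards [hmem] with z hz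
      rw [hQeval z hz]
      simp only [Pi.neg_apply, Pi.mul_apply, hPeval z]
    have huniq : Polynomial.eval ((lam k : ℝ) : ℂ) (derivative Qpoly)
        = -((∑ i : Fin N, ((x i : ℝ) : ℂ) / (((x i : ℝ) : ℂ) - ((lam k : ℝ) : ℂ)) ^ 2) *
          ∏ i : Fin N, (((lam k : ℝ) : ℂ) - ((x i : ℝ) : ℂ))) := by
      have := (Qpoly.hasDerivAt ((lam k : ℝ) : ℂ)).unique hDQ
      rw [this, hPeval]
    have hSder : Polynomial.eval ((lam k : ℝ) : ℂ) (derivative Spoly)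
        = ∏ k' ∈ univ.erase k, (((lam k : ℝ) : ℂ) - ((lam k' : ℝ) : ℂ)) := by
      rw [hSdef, derivative_finset_prod, eval_finset_sum]
      rw [Finset.sum_eq_single k]
      · rw [eval_mul, eval_prod]
        simp
      · intro m _ hm
        rw [eval_mul, eval_prod]
        have h0 : (∏ k' ∈ univ.erase m,
            Polynomial.eval ((lam k : ℝ) : ℂ) ((X : ℂ[X]) - C ((lam k' : ℝ) : ℂ))) = 0 :=
          Finset.prod_eq_zero (mem_erase.mpr ⟨Ne.symm hm, mem_univ k⟩) (by simp)
        rw [h0, zero_mul]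
      · simp
    have hQder2 : Polynomial.eval ((lam k : ℝ) : ℂ) (derivative Qpoly)
        = N * ∏ k' ∈ univ.erase k, (((lam k : ℝ) : ℂ) - ((lam k' : ℝ) : ℂ)) := by
      rw [hQS, derivative_C_mul, eval_mul, eval_C, hSder]
    have hkey : (∑ i : Fin N, ((x i : ℝ) : ℂ) / (((x i : ℝ) : ℂ) - ((lam k : ℝ) : ℂ)) ^ 2) *
        ∏ i : Fin N, (((lam k : ℝ) : ℂ) - ((x i : ℝ) : ℂ))
        = -(N * ∏ k' ∈ univ.erase k, (((lam k : ℝ) : ℂ) - ((lam k' : ℝ) : ℂ))) := by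
      have h := huniq.symm.trans hQder2
      linear_combination -h
    have hxjw : ((x j : ℝ) : ℂ) - ((lam k : ℝ) : ℂ) ≠ 0 := sub_ne_zero.mpr (hxlc j k)
    have hsplit : (∏ i : Fin N, (((lam k : ℝ) : ℂ) - ((x i : ℝ) : ℂ)))
        = (((lam k : ℝ) : ℂ) - ((x j : ℝ) : ℂ)) *
          ∏ i ∈ univ.erase j, (((lam k : ℝ) : ℂ) - ((x i : ℝ) : ℂ)) :=
      (Finset.mul_prod_erase univ _ (mem_univ j)).symm
    rw [hγc, hB]
    rw [hsplit] at hkey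
    field_simp
    rw [eq_div_iff (hprodl k)]
    linear_combination hkey
  -- membership facts for circle points
  have hsph : ∀ z ∈ Metric.sphere c r,
      (∀ i : Fin N, z ≠ ((x i : ℝ) : ℂ)) ∧ (∀ k : Fin N, z ≠ ((lam k : ℝ) : ℂ)) := by
    intro z hz
    have hd : ‖z - c‖ = r := by
      rw [← Complex.dist_eq]
      exact Metric.mem_sphere.mp hz
    constructor
    · intro i h
      rw [h] at hd
      exact absurd hd (ne_of_lt (h_in i).2)
    · intro k h
      rw [h] at hd
      exact absurd hd (ne_of_lt (h_in k).1)
  -- pointwise identity on the circle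
  have hsphere : Set.EqOn
      (fun z => g z / ((∑ i : Fin N, z / (((x i : ℝ) : ℂ) - z)) * (((x j : ℝ) : ℂ) - z)))
      (fun z => ∑ k : Fin N, (B k / N) * ((z - ((lam k : ℝ) : ℂ))⁻¹ * g z))
      (Metric.sphere c r) := by
    intro z hz
    obtain ⟨hzx, hzl⟩ := hsph z hz
    have hprodxz : (∏ i : Fin N, (z - ((x i : ℝ) : ℂ))) ≠ 0 :=
      Finset.prod_ne_zero_iff.mpr fun i _ => sub_ne_zero.mpr (hzx i)
    have hprodlz : (∏ k : Fin N, (z - ((lam k : ℝ) : ℂ))) ≠ 0 :=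
      Finset.prod_ne_zero_iff.mpr fun k _ => sub_ne_zero.mpr (hzl k)
    have h1 : (∑ i : Fin N, z / (((x i : ℝ) : ℂ) - z)) * ∏ i : Fin N, (z - ((x i : ℝ) : ℂ))
        = -((N : ℂ) * ∏ k : Fin N, (z - ((lam k : ℝ) : ℂ))) := by
      have hq := hQeval z hzx
      rw [hQS, eval_mul, eval_C, hSdef, eval_prod] at hq
      simp only [eval_sub, eval_X, eval_C] at hq
      linear_combination hq
    have h2 : (∏ i ∈ univ.erase j, (z - ((x i : ℝ) : ℂ)))
        = ∑ k : Fin N, B k * ∏ k' ∈ univ.erase k, (z - ((lam k' : ℝ) : ℂ)) := by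
      have hp := congrArg (Polynomial.eval z) hPF
      rw [eval_prod, eval_finset_sum] at hp
      simp only [eval_mul, eval_C, eval_prod, eval_sub, eval_X] at hp
      rw [hB]
      exact hp
    have hterm : ∀ k ∈ (univ : Finset (Fin N)),
        (B k / N) * ((z - ((lam k : ℝ) : ℂ))⁻¹ * g z)
          = (B k * ∏ k' ∈ univ.erase k, (z - ((lam k' : ℝ) : ℂ))) *
            (g z / (N * ∏ k'' : Fin N, (z - ((lam k'' : ℝ) : ℂ)))) := by
      intro k _
      have hzk : z - ((lam k : ℝ) : ℂ) ≠ 0 := sub_ne_zero.mpr (hzl k)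
      have hsp : (∏ k'' : Fin N, (z - ((lam k'' : ℝ) : ℂ)))
          = (z - ((lam k : ℝ) : ℂ)) * ∏ k' ∈ univ.erase k, (z - ((lam k' : ℝ) : ℂ)) :=
        (Finset.mul_prod_erase univ _ (mem_univ k)).symm
      have hpe : (∏ k' ∈ univ.erase k, (z - ((lam k' : ℝ) : ℂ))) ≠ 0 := by
        rw [hsp] at hprodlz
        exact right_ne_zero_of_mul hprodlz
      rw [hsp]
      field_simp
    simp only []
    rw [Finset.sum_congr rfl hterm, ← Finset.sum_mul, ← h2]
    have hxjz : ((x j : ℝ) : ℂ) - z ≠ 0 := sub_ne_zero.mpr (Ne.symm (hzx j))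
    have hsplit : (∏ i : Fin N, (z - ((x i : ℝ) : ℂ)))
        = (z - ((x j : ℝ) : ℂ)) * ∏ i ∈ univ.erase j, (z - ((x i : ℝ) : ℂ)) :=
      (Finset.mul_prod_erase univ _ (mem_univ j)).symm
    have hpej : (∏ i ∈ univ.erase j, (z - ((x i : ℝ) : ℂ))) ≠ 0 := by
      rw [hsplit] at hprodxz
      exact right_ne_zero_of_mul hprodxz
    have hφval : (∑ i : Fin N, z / (((x i : ℝ) : ℂ) - z))
        = -((N : ℂ) * ∏ k : Fin N, (z - ((lam k : ℝ) : ℂ))) / ∏ i : Fin N, (z - ((x i : ℝ) : ℂ)) := by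
      rw [eq_div_iff hprodxz]
      exact h1
    rw [hφval, hsplit]
    field_simp
    ring
  -- Cauchy integral formula for each pole
  have hball : ∀ k : Fin N, ((lam k : ℝ) : ℂ) ∈ Metric.ball c r := by
    intro k
    rw [Metric.mem_ball, Complex.dist_eq]
    exact (h_in k).1
  have hgd : DifferentiableOn ℂ g (Metric.closedBall c r) := hg.mono hUball
  have hint : ∀ k ∈ (univ : Finset (Fin N)),
      CircleIntegrable (fun z => (B k / N) * ((z - ((lam k : ℝ) : ℂ))⁻¹ * g z)) c r := by
    intro k _
    apply ContinuousOn.circleIntegrable hr.le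
    apply ContinuousOn.mul continuousOn_const
    apply ContinuousOn.mul
    · apply ContinuousOn.inv₀ ((continuous_id.sub continuous_const).continuousOn)
      intro z hz
      exact sub_ne_zero.mpr ((hsph z hz).2 k)
    · exact hg.continuousOn.mono (Metric.sphere_subset_closedBall.trans hUball)
  have hI1 : (∮ z in C(c, r),
        g z / ((∑ i : Fin N, z / (((x i : ℝ) : ℂ) - z)) * (((x j : ℝ) : ℂ) - z)))
      = ∑ k : Fin N, ∮ z in C(c, r), (B k / N) * ((z - ((lam k : ℝ) : ℂ))⁻¹ * g z) := by
    rw [circleIntegral.integral_congr hr.le hsphere]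
    exact circleIntegral_finset_sum univ _ hint
  rw [hI1]
  have hI2 : ∀ k : Fin N,
      (∮ z in C(c, r), (B k / N) * ((z - ((lam k : ℝ) : ℂ))⁻¹ * g z))
        = (B k / N) * (2 * Real.pi * Complex.I * g ((lam k : ℝ) : ℂ)) := by
    intro k
    rw [circleIntegral.integral_const_mul]
    congr 1
    have h := hgd.circleIntegral_sub_inv_smul (hball k)
    simpa [smul_eq_mul] using h
  rw [Finset.sum_congr rfl fun k _ => hI2 k, Finset.mul_sum]
  refine Finset.sum_congr rfl fun k _ => ?_
  have h2pi : (2 * (Real.pi : ℂ) * Complex.I) ≠ 0 := by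
    simp [Real.pi_ne_zero, Complex.I_ne_zero, Complex.ofReal_ne_zero]
  calc (γ k : ℂ) * g ((lam k : ℝ) : ℂ) / (((x j : ℝ) : ℂ) - ((lam k : ℝ) : ℂ))
      = ((γ k : ℂ) / (((x j : ℝ) : ℂ) - ((lam k : ℝ) : ℂ))) * g ((lam k : ℝ) : ℂ) := by ring
    _ = (B k / N) * g ((lam k : ℝ) : ℂ) := by rw [hgamma k]
    _ = 1 / (2 * Real.pi * Complex.I) *
          (B k / N * (2 * Real.pi * Complex.I * g ((lam k : ℝ) : ℂ))) := by
        field_simp
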